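/- Let X and M be m×n real matrices with m ≤ n and m even, and let k be an integer with 1 ≤ k ≤ m/2 − 1. Then (λ_{m/2}(X) − λ_{m/2}(X − M))² ≤ 2·max{(λ_{m/2 − k}(X − M) − λ_{m/2}(X − M))², (λ_{m/2 + k}(X − M) − λ_{m/2}(X − M))²} + 2 λ_{k+1}(M)². -/

import Mathlib

open MeasureTheory ProbabilityTheory Filter Matrix

noncomputable section

/-- Singular values of a real `m × n` matrix, in decreasing order (`0`-indexed):
`svalsDesc A 0 ≥ svalsDesc A 1 ≥ …` (the square roots of the eigenvalues of `A Aᵀ`). -/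
def svalsDesc {m n : ℕ} (A : Matrix (Fin m) (Fin n) ℝ) : Fin m → ℝ := fun i =>
  let hA : (A * Aᴴ).IsHermitian := Matrix.isHermitian_mul_conjTranspose_self A
  Real.sqrt (hA.eigenvalues (Tuple.sort hA.eigenvalues i.rev))

/-- `sval A k` is the `k`-th largest singular value `λ_k(A)` (`1`-indexed), with junk
value `0` if `k` is out of range. -/
def sval {m n : ℕ} (A : Matrix (Fin m) (Fin n) ℝ) (k : ℕ) : ℝ :=
  if h : k - 1 < m then svalsDesc A ⟨k - 1, h⟩ else 0

/-- Nuclear norm `‖A‖_* = Σ_i λ_i(A)`. -/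
def nuclearNorm {m n : ℕ} (A : Matrix (Fin m) (Fin n) ℝ) : ℝ :=
  ∑ i : Fin m, svalsDesc A i

/-- Squared Frobenius norm `‖A‖_F² = Σ_{ij} A_{ij}²`. -/
def frobSq {m n : ℕ} (A : Matrix (Fin m) (Fin n) ℝ) : ℝ :=
  ∑ i : Fin m, ∑ j : Fin n, (A i j) ^ 2

/-- Operator (spectral) norm: the largest singular value. -/
def opNorm {m n : ℕ} (A : Matrix (Fin m) (Fin n) ℝ) : ℝ := sval A 1

/-- Density of the Marčenko–Pastur distribution with parameter `γ`:
`(1/(2πγx))·√((γ₊ − x)(x − γ₋))` on `[γ₋, γ₊]`, where `γ± = (1 ± √γ)²`. -/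
def mpDensity (γ : ℝ) (x : ℝ) : ℝ :=
  if (1 - Real.sqrt γ) ^ 2 ≤ x ∧ x ≤ (1 + Real.sqrt γ) ^ 2 then
    Real.sqrt (((1 + Real.sqrt γ) ^ 2 - x) * (x - (1 - Real.sqrt γ) ^ 2)) / (2 * Real.pi * γ * x)
  else 0

/-- CDF `F_γ` of the Marčenko–Pastur distribution with parameter `γ`. -/
def mpCDF (γ : ℝ) (x : ℝ) : ℝ := ∫ t in Set.Iic x, mpDensity γ t

/-- Quantile function `F⁻¹(p) = inf {x | F x ≥ p}`. -/
def quantileOf (F : ℝ → ℝ) (p : ℝ) : ℝ := sInf {x | p ≤ F x}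

/-- Quantile function of the Marčenko–Pastur distribution. -/
def mpQuantile (γ : ℝ) (p : ℝ) : ℝ := quantileOf (mpCDF γ) p

/-- `μ_γ = F_γ⁻¹(1/2)`, the median of the Marčenko–Pastur distribution. -/
def mpMedian (γ : ℝ) : ℝ := mpQuantile γ (1 / 2)

/-- A law on `ℝ` is sub-Gaussian if its moment generating function satisfies a
sub-Gaussian bound. -/
def IsSubGaussianLaw (ν : Measure ℝ) : Prop :=
  ∃ c > 0, ∀ t : ℝ, ∫ x, Real.exp (t * x) ∂ν ≤ Real.exp (c * t ^ 2)

/-- The entries of the random matrix `A` are i.i.d. with common law `ν`. -/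
def IIDEntries {Ω : Type*} [MeasurableSpace Ω] (μ : Measure Ω) {m n : ℕ}
    (A : Ω → Matrix (Fin m) (Fin n) ℝ) (ν : Measure ℝ) : Prop :=
  (∀ i j, Measurable fun ω => A ω i j) ∧
  (∀ i j, Measure.map (fun ω => A ω i j) μ = ν) ∧
  iIndepFun (fun (p : Fin m × Fin n) ω => A ω p.1 p.2) μ

/-- The Gavish–Donoho estimator `σ̂ = λ_{m/2}(X) / √(n μ_γ)` (the median singular value,
`m` even, normalized by `√(n μ_γ)`). -/
def sigmaHat {m n : ℕ} (γ : ℝ) (X : Matrix (Fin m) (Fin n) ℝ) : ℝ :=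
  sval X (m / 2) / Real.sqrt (n * mpMedian γ)

/-- `u`, `v` together with the singular values of `X` form a singular value
decomposition `X = Σ_i λ_i(X) uᵢ vᵢᵀ` of `X` (with `uᵢ`, `vᵢ` orthonormal families). -/
def IsSVD {m n : ℕ} (X : Matrix (Fin m) (Fin n) ℝ)
    (u : Fin m → Fin m → ℝ) (v : Fin m → Fin n → ℝ) : Prop :=
  (∀ i j, ∑ k, u i k * u j k = if i = j then 1 else 0) ∧
  (∀ i j, ∑ k, v i k * v j k = if i = j then 1 else 0) ∧
  X = ∑ i : Fin m, svalsDesc X i • Matrix.vecMulVec (u i) (v i)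

/-- Singular value thresholding: keep the part of the SVD `X = Σ_i λ_i(X) uᵢ vᵢᵀ`
with singular values `≥ τ`.  With `τ = (2+η) σ̂ √n` this is the modified USVT
estimator `M̂`. -/
def usvtFrom {m n : ℕ} (X : Matrix (Fin m) (Fin n) ℝ)
    (u : Fin m → Fin m → ℝ) (v : Fin m → Fin n → ℝ) (τ : ℝ) : Matrix (Fin m) (Fin n) ℝ :=
  ∑ i ∈ Finset.univ.filter (fun i => τ ≤ svalsDesc X i),
    svalsDesc X i • Matrix.vecMulVec (u i) (v i)

namespace SW

variable {m n : ℕ}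

/-! ### Quadratic form -/

def qf (A : Matrix (Fin m) (Fin n) ℝ) (x : Fin m → ℝ) : ℝ := (Aᴴ *ᵥ x) ⬝ᵥ (Aᴴ *ᵥ x)

lemma dot_self_nonneg {k : ℕ} (y : Fin k → ℝ) : 0 ≤ y ⬝ᵥ y :=
  Finset.sum_nonneg fun i _ => mul_self_nonneg _

lemma qf_nonneg (A : Matrix (Fin m) (Fin n) ℝ) (x : Fin m → ℝ) : 0 ≤ qf A x :=
  dot_self_nonneg _

lemma sum_dot {ι : Type*} (s : Finset ι) (f : ι → (Fin m → ℝ)) (y : Fin m → ℝ) :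
    (∑ i ∈ s, f i) ⬝ᵥ y = ∑ i ∈ s, f i ⬝ᵥ y := by
  simp only [dotProduct, Finset.sum_apply, Finset.sum_mul]
  exact Finset.sum_comm

lemma dot_sum {ι : Type*} (s : Finset ι) (y : Fin m → ℝ) (f : ι → (Fin m → ℝ)) :
    y ⬝ᵥ (∑ i ∈ s, f i) = ∑ i ∈ s, y ⬝ᵥ f i := by
  simp only [dotProduct, Finset.sum_apply, Finset.mul_sum]
  exact Finset.sum_comm

lemma quad_eq (A : Matrix (Fin m) (Fin n) ℝ) (x : Fin m → ℝ) :
    x ⬝ᵥ ((A * Aᴴ) *ᵥ x) = qf A x := by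
  have hAT : Aᴴ = Aᵀ := by
    ext i j; simp [Matrix.conjTranspose_apply, Matrix.transpose_apply]
  rw [← Matrix.mulVec_mulVec, Matrix.dotProduct_mulVec, qf, hAT, Matrix.mulVec_transpose]

lemma sqrt_dot_triangle {k : ℕ} (y z : Fin k → ℝ) :
    Real.sqrt ((y + z) ⬝ᵥ (y + z)) ≤ Real.sqrt (y ⬝ᵥ y) + Real.sqrt (z ⬝ᵥ z) := by
  have hy := dot_self_nonneg y
  have hz := dot_self_nonneg z
  have hcs : (y ⬝ᵥ z) ^ 2 ≤ (y ⬝ᵥ y) * (z ⬝ᵥ z) := by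
    have := Finset.sum_mul_sq_le_sq_mul_sq Finset.univ y z
    simpa [dotProduct, pow_two, mul_assoc, mul_comm, mul_left_comm] using this
  have hyz : y ⬝ᵥ z ≤ Real.sqrt (y ⬝ᵥ y) * Real.sqrt (z ⬝ᵥ z) := by
    rw [← Real.sqrt_mul hy]
    calc y ⬝ᵥ z ≤ |y ⬝ᵥ z| := le_abs_self _
    _ = Real.sqrt ((y ⬝ᵥ z) ^ 2) := (Real.sqrt_sq_eq_abs _).symm
    _ ≤ _ := Real.sqrt_le_sqrt hcs
  have hexp : (y + z) ⬝ᵥ (y + z) = y ⬝ᵥ y + 2 * (y ⬝ᵥ z) + z ⬝ᵥ z := by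
    simp [add_dotProduct, dotProduct_add, dotProduct_comm z y]; ring
  have h2 : (y + z) ⬝ᵥ (y + z) ≤ (Real.sqrt (y ⬝ᵥ y) + Real.sqrt (z ⬝ᵥ z)) ^ 2 := by
    have h1 : Real.sqrt (y ⬝ᵥ y) ^ 2 = y ⬝ᵥ y := Real.sq_sqrt hy
    have h2' : Real.sqrt (z ⬝ᵥ z) ^ 2 = z ⬝ᵥ z := Real.sq_sqrt hz
    nlinarith [hyz]
  calc Real.sqrt ((y + z) ⬝ᵥ (y + z))
      ≤ Real.sqrt ((Real.sqrt (y ⬝ᵥ y) + Real.sqrt (z ⬝ᵥ z)) ^ 2) := Real.sqrt_le_sqrt h2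
  _ = _ := Real.sqrt_sq (by positivity)

/-! ### Spectral data of `A Aᴴ` -/

section spec
variable (A : Matrix (Fin m) (Fin n) ℝ)

def hherm : (A * Aᴴ).IsHermitian := Matrix.isHermitian_mul_conjTranspose_self A

def μ (i : Fin m) : ℝ := (hherm A).eigenvalues (Tuple.sort (hherm A).eigenvalues i)

def evec (i : Fin m) : Fin m → ℝ :=
  ⇑((hherm A).eigenvectorBasis (Tuple.sort (hherm A).eigenvalues i))

lemma μ_mono : Monotone (μ A) := Tuple.monotone_sort _

lemma μ_nonneg (i : Fin m) : 0 ≤ μ A i :=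
  (Matrix.posSemidef_self_mul_conjTranspose A).eigenvalues_nonneg _

lemma svalsDesc_eq (i : Fin m) : svalsDesc A i = Real.sqrt (μ A i.rev) := rfl

lemma svalsDesc_nonneg (i : Fin m) : 0 ≤ svalsDesc A i := Real.sqrt_nonneg _

lemma svalsDesc_sq (i : Fin m) : svalsDesc A i ^ 2 = μ A i.rev := by
  rw [svalsDesc_eq, Real.sq_sqrt (μ_nonneg A i.rev)]

lemma mulVec_evec (i : Fin m) : (A * Aᴴ) *ᵥ evec A i = μ A i • evec A i :=
  (hherm A).mulVec_eigenvectorBasis _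

lemma evec_dot (i j : Fin m) : evec A i ⬝ᵥ evec A j = if i = j then 1 else 0 := by
  have horm : Orthonormal ℝ ((hherm A).eigenvectorBasis ∘ Tuple.sort (hherm A).eigenvalues) :=
    ((hherm A).eigenvectorBasis.orthonormal).comp _ (Tuple.sort (hherm A).eigenvalues).injective
  have h := orthonormal_iff_ite.mp horm i j
  rw [← h]
  simp only [PiLp.inner_apply, RCLike.inner_apply, conj_trivial, Function.comp_apply]
  exact Finset.sum_congr rfl fun x _ => mul_comm _ _

lemma evec_li : LinearIndependent ℝ (evec A) := by
  rw [Fintype.linearIndependent_iff]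
  intro c hc j
  have := congrArg (fun y => y ⬝ᵥ evec A j) hc
  simpa [sum_dot, smul_dotProduct, evec_dot, Finset.sum_ite_eq',
    smul_eq_mul] using this

/-- span of the eigenvectors indexed by `S` -/
def spanS (S : Finset (Fin m)) : Submodule ℝ (Fin m → ℝ) :=
  Submodule.span ℝ (Set.range fun i : S => evec A i)

lemma finrank_spanS (S : Finset (Fin m)) : Module.finrank ℝ (spanS A S) = S.card := by
  have hli : LinearIndependent ℝ (fun i : S => evec A i) :=
    (evec_li A).comp _ Subtype.val_injective
  rw [spanS, finrank_span_eq_card hli, Fintype.card_coe]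

lemma dot_sum_sum (S : Finset (Fin m)) (c d : S → ℝ) :
    (∑ i, c i • evec A i) ⬝ᵥ (∑ j, d j • evec A j) = ∑ i, c i * d i := by
  rw [sum_dot]
  simp only [smul_dotProduct, dot_sum, dotProduct_smul, evec_dot,
    smul_eq_mul, mul_ite, mul_one, mul_zero]
  simp [Subtype.coe_inj, Finset.sum_ite_eq']

lemma spanS_bounds (S : Finset (Fin m)) (x : Fin m → ℝ) (hx : x ∈ spanS A S) :
    (∀ t, (∀ i ∈ S, t ≤ μ A i) → t * (x ⬝ᵥ x) ≤ qf A x) ∧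
    (∀ t, (∀ i ∈ S, μ A i ≤ t) → qf A x ≤ t * (x ⬝ᵥ x)) := by
  obtain ⟨c, rfl⟩ := (Submodule.mem_span_range_iff_exists_fun ℝ).mp hx
  have hdot : (∑ i : S, c i • evec A i) ⬝ᵥ (∑ i : S, c i • evec A i) = ∑ i : S, c i ^ 2 := by
    rw [dot_sum_sum]; simp [pow_two]
  have hmul : (A * Aᴴ) *ᵥ (∑ i : S, c i • evec A i) = ∑ i : S, (c i * μ A i) • evec A i := by
    have h := map_sum ((A * Aᴴ).mulVecLin) (fun i : S => c i • evec A (i : Fin m)) Finset.univ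
    simp only [Matrix.mulVecLin_apply] at h
    rw [h]
    refine Finset.sum_congr rfl fun i _ => ?_
    rw [Matrix.mulVec_smul, mulVec_evec, smul_smul, mul_comm]
  have hq : qf A (∑ i : S, c i • evec A i) = ∑ i : S, μ A i * c i ^ 2 := by
    rw [← quad_eq, hmul, dot_sum_sum]
    congr 1 with i; ring
  constructor
  · intro t ht
    rw [hq, hdot, Finset.mul_sum]
    refine Finset.sum_le_sum fun i _ => ?_
    exact mul_le_mul_of_nonneg_right (ht i i.2) (sq_nonneg _)
  · intro t ht
    rw [hq, hdot, Finset.mul_sum]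
    refine Finset.sum_le_sum fun i _ => ?_
    exact mul_le_mul_of_nonneg_right (ht i i.2) (sq_nonneg _)

/-- lower witness: a subspace of dimension `i+1` on which `qf ≥ svalsDesc i ^ 2`. -/
lemma lower_witness (i : Fin m) :
    ∃ V : Submodule ℝ (Fin m → ℝ), Module.finrank ℝ V = (i : ℕ) + 1 ∧
      ∀ x ∈ V, svalsDesc A i ^ 2 * (x ⬝ᵥ x) ≤ qf A x := by
  refine ⟨spanS A (Finset.Ici i.rev), ?_, fun x hx => ?_⟩
  · rw [finrank_spanS, Fin.card_Ici]
    have h1 : ((i.rev : Fin m) : ℕ) = m - ((i : ℕ) + 1) := Fin.val_rev i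
    have h2 : (i : ℕ) < m := i.2
    omega
  · rw [svalsDesc_sq]
    exact (spanS_bounds A _ x hx).1 _ (fun j hj => μ_mono A (Finset.mem_Ici.mp hj))

/-- upper witness: a subspace of dimension `m - i` on which `qf ≤ svalsDesc i ^ 2`. -/
lemma upper_witness (i : Fin m) :
    ∃ V : Submodule ℝ (Fin m → ℝ), Module.finrank ℝ V = m - (i : ℕ) ∧
      ∀ x ∈ V, qf A x ≤ svalsDesc A i ^ 2 * (x ⬝ᵥ x) := by
  refine ⟨spanS A (Finset.Iic i.rev), ?_, fun x hx => ?_⟩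
  · rw [finrank_spanS, Fin.card_Iic]
    have h1 : ((i.rev : Fin m) : ℕ) = m - ((i : ℕ) + 1) := Fin.val_rev i
    have h2 : (i : ℕ) < m := i.2
    omega
  · rw [svalsDesc_sq]
    exact (spanS_bounds A _ x hx).2 _ (fun j hj => μ_mono A (Finset.mem_Iic.mp hj))

end spec

/-! ### Intersection of three subspaces -/

lemma exists_ne_zero_mem_three (V₁ V₂ V₃ : Submodule ℝ (Fin m → ℝ))
    (h : 2 * m < Module.finrank ℝ V₁ + Module.finrank ℝ V₂ + Module.finrank ℝ V₃) :
    ∃ x : Fin m → ℝ, x ≠ 0 ∧ x ∈ V₁ ∧ x ∈ V₂ ∧ x ∈ V₃ := by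
  have hfr : Module.finrank ℝ (Fin m → ℝ) = m := Module.finrank_fin_fun ℝ
  have key : ∀ (U W : Submodule ℝ (Fin m → ℝ)),
      Module.finrank ℝ U + Module.finrank ℝ W ≤ m + Module.finrank ℝ (U ⊓ W : Submodule ℝ _) := by
    intro U W
    have := Submodule.finrank_sup_add_finrank_inf_eq U W
    have hle : Module.finrank ℝ (U ⊔ W : Submodule ℝ _) ≤ m := by
      simpa [hfr] using Submodule.finrank_le (U ⊔ W)
    omega
  have h12 := key V₁ V₂
  have h123 := key (V₁ ⊓ V₂) V₃
  have hpos : 0 < Module.finrank ℝ (V₁ ⊓ V₂ ⊓ V₃ : Submodule ℝ _) := by omega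
  rw [Module.finrank_pos_iff] at hpos
  obtain ⟨⟨x, hx⟩, hxne⟩ := exists_ne (0 : (V₁ ⊓ V₂ ⊓ V₃ : Submodule ℝ (Fin m → ℝ)))
  refine ⟨x, ?_, hx.1.1, hx.1.2, hx.2⟩
  intro h0
  exact hxne (Subtype.ext h0)

/-! ### Weyl's inequality for singular values -/

lemma dot_self_pos {x : Fin m → ℝ} (hx : x ≠ 0) : 0 < x ⬝ᵥ x := by
  rcases (dot_self_nonneg x).lt_or_eq with h | h
  · exact h
  · exact absurd (dotProduct_self_eq_zero.mp h.symm) hx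

lemma weyl (A B : Matrix (Fin m) (Fin n) ℝ) (i j t : Fin m) (ht : (t : ℕ) = i + j) :
    svalsDesc (A + B) t ≤ svalsDesc A i + svalsDesc B j := by
  obtain ⟨V, hVd, hV⟩ := lower_witness (A + B) t
  obtain ⟨W₁, hW₁d, hW₁⟩ := upper_witness A i
  obtain ⟨W₂, hW₂d, hW₂⟩ := upper_witness B j
  obtain ⟨x, hx0, hxV, hxW₁, hxW₂⟩ := exists_ne_zero_mem_three V W₁ W₂ (by
    rw [hVd, hW₁d, hW₂d]
    have hi : (i : ℕ) < m := i.2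
    have hj : (j : ℕ) < m := j.2
    omega)
  set d := Real.sqrt (x ⬝ᵥ x) with hd
  have hdpos : 0 < d := Real.sqrt_pos.mpr (dot_self_pos hx0)
  -- bound on each piece
  have habove : ∀ (C : Matrix (Fin m) (Fin n) ℝ) (s : ℝ), 0 ≤ s →
      qf C x ≤ s ^ 2 * (x ⬝ᵥ x) → Real.sqrt (qf C x) ≤ s * d := by
    intro C s hs hb
    calc Real.sqrt (qf C x) ≤ Real.sqrt (s ^ 2 * (x ⬝ᵥ x)) := Real.sqrt_le_sqrt hb
    _ = s * d := by
        rw [hd, Real.sqrt_mul (sq_nonneg s), Real.sqrt_sq hs]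
  have hC : svalsDesc (A + B) t * d ≤ Real.sqrt (qf (A + B) x) := by
    have hb := hV x hxV
    have := Real.sqrt_le_sqrt hb
    rw [Real.sqrt_mul (sq_nonneg _), Real.sqrt_sq (svalsDesc_nonneg _ _)] at this
    exact this
  have htri : Real.sqrt (qf (A + B) x) ≤ Real.sqrt (qf A x) + Real.sqrt (qf B x) := by
    have : (A + B)ᴴ *ᵥ x = Aᴴ *ᵥ x + Bᴴ *ᵥ x := by
      rw [Matrix.conjTranspose_add, Matrix.add_mulVec]
    rw [qf, this]
    exact sqrt_dot_triangle _ _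
  have hA := habove A (svalsDesc A i) (svalsDesc_nonneg _ _) (hW₁ x hxW₁)
  have hB := habove B (svalsDesc B j) (svalsDesc_nonneg _ _) (hW₂ x hxW₂)
  have : svalsDesc (A + B) t * d ≤ (svalsDesc A i + svalsDesc B j) * d := by
    calc svalsDesc (A + B) t * d ≤ Real.sqrt (qf (A + B) x) := hC
    _ ≤ Real.sqrt (qf A x) + Real.sqrt (qf B x) := htri
    _ ≤ svalsDesc A i * d + svalsDesc B j * d := add_le_add hA hB
    _ = _ := by ring
  exact le_of_mul_le_mul_right this hdpos

lemma sval_weyl (A B : Matrix (Fin m) (Fin n) ℝ) (i j : ℕ) (hi : 1 ≤ i) (hj : 1 ≤ j)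
    (hij : i + j - 1 ≤ m) : sval (A + B) (i + j - 1) ≤ sval A i + sval B j := by
  have h1 : i + j - 1 - 1 < m := by omega
  have h2 : i - 1 < m := by omega
  have h3 : j - 1 < m := by omega
  rw [sval, sval, sval, dif_pos h1, dif_pos h2, dif_pos h3]
  exact weyl A B ⟨i - 1, h2⟩ ⟨j - 1, h3⟩ ⟨i + j - 1 - 1, h1⟩ (by simp; omega)

lemma svalsDesc_neg (M : Matrix (Fin m) (Fin n) ℝ) : svalsDesc (-M) = svalsDesc M := by
  have e : (-M) * (-M)ᴴ = M * Mᴴ := by rw [Matrix.conjTranspose_neg, Matrix.neg_mul, Matrix.mul_neg, neg_neg]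
  funext i
  simp only [svalsDesc]
  congr 1
  have : ∀ (X Y : Matrix (Fin m) (Fin m) ℝ) (hX : X.IsHermitian) (hY : Y.IsHermitian),
      X = Y → hX.eigenvalues = hY.eigenvalues := by
    rintro X Y hX hY rfl; rfl
  rw [this _ _ (Matrix.isHermitian_mul_conjTranspose_self (-M))
    (Matrix.isHermitian_mul_conjTranspose_self M) e]

lemma sval_neg (M : Matrix (Fin m) (Fin n) ℝ) (k : ℕ) : sval (-M) k = sval M k := by
  rw [sval, sval, svalsDesc_neg]

lemma sval_nonneg (M : Matrix (Fin m) (Fin n) ℝ) (k : ℕ) : 0 ≤ sval M k := by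
  rw [sval]
  split
  · exact svalsDesc_nonneg _ _
  · exact le_refl 0

end SW

/-- Weyl-type bound for the median singular value.  Let `X`, `M` be
`m × n` real matrices (`m ≤ n`, `m` even) and let `1 ≤ k ≤ m/2 − 1`.  Then
`(λ_{m/2}(X) − λ_{m/2}(X − M))² ≤
  2 max{(λ_{m/2−k}(X−M) − λ_{m/2}(X−M))², (λ_{m/2+k}(X−M) − λ_{m/2}(X−M))²}
  + 2 λ_{k+1}(M)²`. -/
theorem median_sval_perturbation (m n : ℕ) (hmn : m ≤ n) (hm : Even m)
    (X M : Matrix (Fin m) (Fin n) ℝ) (k : ℕ) (hk1 : 1 ≤ k) (hk2 : k ≤ m / 2 - 1) :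
    (sval X (m / 2) - sval (X - M) (m / 2)) ^ 2 ≤
      2 * max ((sval (X - M) (m / 2 - k) - sval (X - M) (m / 2)) ^ 2)
              ((sval (X - M) (m / 2 + k) - sval (X - M) (m / 2)) ^ 2)
        + 2 * (sval M (k + 1)) ^ 2 := by
  have hm2 : 2 ≤ m / 2 := by omega
  have hm4 : 4 ≤ m := by
    rcases hm with ⟨l, rfl⟩; omega
  -- first Weyl application: sval X (m/2) ≤ sval (X-M) (m/2-k) + sval M (k+1)
  have w1 : sval X (m / 2) ≤ sval (X - M) (m / 2 - k) + sval M (k + 1) := by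
    have h := SW.sval_weyl (X - M) M (m / 2 - k) (k + 1) (by omega) (by omega) (by omega)
    rw [sub_add_cancel] at h
    have he : m / 2 - k + (k + 1) - 1 = m / 2 := by omega
    rwa [he] at h
  -- second: sval (X-M) (m/2+k) ≤ sval X (m/2) + sval M (k+1)
  have w2 : sval (X - M) (m / 2 + k) ≤ sval X (m / 2) + sval M (k + 1) := by
    have h := SW.sval_weyl X (-M) (m / 2) (k + 1) (by omega) (by omega) (by omega)
    rw [SW.sval_neg] at h
    have he : m / 2 + (k + 1) - 1 = m / 2 + k := by omega
    have hXM : X + -M = X - M := by rw [sub_eq_add_neg]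
    rwa [hXM, he] at h
  set a := sval X (m / 2) - sval (X - M) (m / 2) with ha
  set p := sval (X - M) (m / 2 - k) - sval (X - M) (m / 2) with hp
  set q := sval (X - M) (m / 2 + k) - sval (X - M) (m / 2) with hq
  set d := sval M (k + 1) with hdd
  have hd0 : 0 ≤ d := SW.sval_nonneg M (k + 1)
  have h1 : a ≤ p + d := by rw [ha, hp]; linarith
  have h2 : q - d ≤ a := by rw [ha, hq]; linarith
  have hmp : p ^ 2 ≤ max (p ^ 2) (q ^ 2) := le_max_left _ _
  have hmq : q ^ 2 ≤ max (p ^ 2) (q ^ 2) := le_max_right _ _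
  rcases le_or_gt 0 a with hle | hlt
  · nlinarith [sq_nonneg (p - d), sq_nonneg (p + d - a)]
  · nlinarith [sq_nonneg (q + d), sq_nonneg (q - d - a)]

end
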